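/- arXiv:2109.01849 — 6 statements merged into one kernel-verified Lean document; each statement's English description precedes it below -/
import Mathlib

section
/- Let h, e, i > 0 with h - e - i > 0, and let p_S = e(h-e-i)/(h(i+e)), p_I = e/h, p_C = i/(i+e). Then the expected payoff of the Sitter strategy, h - e(1 + p_C/(p_S + p_I)), equals h - e - i. -/
theorem stmt_2 (h e i : ℝ) (hh : 0 < h) (he : 0 < e) (hi : 0 < i)
    (hcond : 0 < h - e - i)
    (pS pI pC : ℝ)
    (hpS : pS = e * (h - e - i) / (h * (i + e)))
    (hpI : pI = e / h)
    (hpC : pC = i / (i + e)) :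
    h - e * (1 + pC / (pS + pI)) = h - e - i := by
  have hie : i + e ≠ 0 := by positivity
  have hh' : h ≠ 0 := hh.ne'
  have hsum : pS + pI = e / (i + e) := by
    rw [hpS, hpI]; field_simp; ring
  rw [hsum, hpC]
  have he' : e ≠ 0 := he.ne'
  field_simp
  ring
end

section
/- Let h, e, i > 0 with h - e - i > 0, and let p_S = e(h-e-i)/(h(i+e)), p_I = e/h, p_C = i/(i+e). Then the expected payoff of the Cheater strategy, h·p_S/(p_S + p_I), equals h - e - i. -/
theorem stmt_3 (h e i : ℝ) (hh : 0 < h) (he : 0 < e) (hi : 0 < i)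
    (hcond : 0 < h - e - i)
    (pS pI pC : ℝ)
    (hpS : pS = e * (h - e - i) / (h * (i + e)))
    (hpI : pI = e / h)
    (hpC : pC = i / (i + e)) :
    h * pS / (pS + pI) = h - e - i := by
  subst hpS hpI hpC
  have h1 : h ≠ 0 := hh.ne'
  have h2 : i + e ≠ 0 := by positivity
  have h3 : e ≠ 0 := he.ne'
  field_simp
  ring
end

section
/- Let h, e, i > 0 with h - e - i > 0. At the point (p_S, p_I, p_C) = (e(h-e-i)/(h(i+e)), e/h, i/(i+e)), all three expected payoffs E(S) = h - e(1 + p_C/(p_S+p_I)), E(I) = h - e - i, and E(C) = h·p_S/(p_S+p_I) are equal, i.e., this point is a Bayesian Nash equilibrium. -/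
theorem stmt_4 (h e i : ℝ) (hh : 0 < h) (he : 0 < e) (hi : 0 < i)
    (hcond : 0 < h - e - i)
    (pS pI pC : ℝ)
    (hpS : pS = e * (h - e - i) / (h * (i + e)))
    (hpI : pI = e / h)
    (hpC : pC = i / (i + e)) :
    h - e * (1 + pC / (pS + pI)) = h - e - i ∧
    h * pS / (pS + pI) = h - e - i := by
  have hie : (0:ℝ) < i + e := by linarith
  have hsum : pS + pI = e / (i + e) := by
    subst hpS hpI
    field_simp
    ring
  constructor
  · rw [hsum, hpC]
    field_simp
    ring
  · rw [hsum, hpS]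
    field_simp
end

section
/- Let h, e, i > 0 with h - e - i > 0. Suppose p_S, p_I, p_C > 0 with p_S + p_I + p_C = 1, and suppose h - e(1 + p_C/(p_S+p_I)) = h - e - i = h·p_S/(p_S+p_I). Then (p_S, p_I, p_C) = (e(h-e-i)/(h(i+e)), e/h, i/(i+e)). That is, the interior Bayesian Nash equilibrium is unique. -/
theorem stmt_5 (h e i : ℝ) (hh : 0 < h) (he : 0 < e) (hi : 0 < i)
    (hcond : 0 < h - e - i)
    (pS pI pC : ℝ) (hpS : 0 < pS) (hpI : 0 < pI) (hpC : 0 < pC)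
    (hsum : pS + pI + pC = 1)
    (h1 : h - e * (1 + pC / (pS + pI)) = h - e - i)
    (h2 : h - e - i = h * pS / (pS + pI)) :
    pS = e * (h - e - i) / (h * (i + e)) ∧ pI = e / h ∧ pC = i / (i + e) := by
  have hT : (0:ℝ) < pS + pI := by linarith
  have hie : (0:ℝ) < i + e := by linarith
  field_simp at h1 h2
  -- h1 : e * pC = i * (pS + pI), h2-like
  have hpc : pC = i / (i + e) := by
    field_simp
    nlinarith [h1, hsum]
  have hT' : pS + pI = e / (i + e) := by
    have : pC = 1 - (pS + pI) := by linarith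
    rw [this] at hpc
    field_simp at hpc ⊢
    linarith
  have hps : pS = e * (h - e - i) / (h * (i + e)) := by
    field_simp
    rw [hT'] at h2; field_simp at h2; nlinarith [h2]
  refine ⟨hps, ?_, hpc⟩
  have : pI = e / (i + e) - pS := by linarith [hT']
  rw [this, hps]
  field_simp
  ring
end

section
/- Let h, e, i > 0 with h - e - i > 0, and let (p_S*, p_I*, p_C*) = (e(h-e-i)/(h(i+e)), e/h, i/(i+e)). Then the replicator dynamics vector field vanishes at this point: for each strategy X ∈ {S, I, C}, p_X*·(E(X) - W) = 0, where W is the population average payoff. -/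
theorem stmt_12 (h e i : ℝ) (hh : 0 < h) (he : 0 < e) (hi : 0 < i)
    (hcond : 0 < h - e - i)
    (pS pI pC : ℝ)
    (hpS : pS = e * (h - e - i) / (h * (i + e)))
    (hpI : pI = e / h)
    (hpC : pC = i / (i + e))
    (ES EI EC W : ℝ)
    (hES : ES = h - e * (1 + pC / (pS + pI)))
    (hEI : EI = h - e - i)
    (hEC : EC = h * pS / (pS + pI))
    (hW : W = pS * ES + pI * EI + pC * EC) :
    pS * (ES - W) = 0 ∧ pI * (EI - W) = 0 ∧ pC * (EC - W) = 0 := by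
  have hie : (0:ℝ) < i + e := by linarith
  have hsum : pS + pI = e / (i + e) := by
    rw [hpS, hpI]; field_simp; ring
  have hES' : ES = h - e - i := by
    rw [hES, hsum, hpC]
    rw [div_div_div_eq]
    field_simp
    ring
  have hEC' : EC = h - e - i := by
    rw [hEC, hsum, hpS]
    field_simp
  have h1 : pS + pI + pC = 1 := by
    rw [hsum, hpC]; field_simp; ring
  have hW' : W = h - e - i := by
    rw [hW, hES', hEI, hEC']; nlinarith [h1]
  refine ⟨?_, ?_, ?_⟩ <;> rw [hW'] <;> simp [hES', hEI, hEC']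
end

section
/- Let h, e, i > 0 with h - e - i > 0. The set of interior points (p_S, p_I, p_C) of the 2-simplex satisfying both e·p_C/(p_S+p_I) = i and h·p_S/(p_S+p_I) = h - e - i is a singleton, namely {(e(h-e-i)/(h(i+e)), e/h, i/(i+e))}. -/
theorem stmt_16 (h e i : ℝ) (hh : 0 < h) (he : 0 < e) (hi : 0 < i)
    (hcond : 0 < h - e - i) :
    {p : ℝ × ℝ × ℝ | 0 < p.1 ∧ 0 < p.2.1 ∧ 0 < p.2.2 ∧
        p.1 + p.2.1 + p.2.2 = 1 ∧
        e * p.2.2 / (p.1 + p.2.1) = i ∧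
        h * p.1 / (p.1 + p.2.1) = h - e - i} =
      {(e * (h - e - i) / (h * (i + e)), e / h, i / (i + e))} := by
  have hie : 0 < i + e := by linarith
  ext ⟨a, b, c⟩
  simp only [Set.mem_setOf_eq, Set.mem_singleton_iff, Prod.mk.injEq]
  constructor
  · rintro ⟨ha, hb, hc, hsum, h1, h2⟩
    have hab : 0 < a + b := by linarith
    rw [div_eq_iff (ne_of_gt hab)] at h1 h2
    have hc' : c = i / (i + e) := by
      rw [eq_div_iff (ne_of_gt hie)]
      linear_combination h1 + i * hsum
    have hcv : c * (i + e) = i := (eq_div_iff (ne_of_gt hie)).mp hc'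
    have habv : (a + b) * (i + e) = e := by linear_combination (i + e) * hsum - hcv
    have ha' : a = e * (h - e - i) / (h * (i + e)) := by
      rw [eq_div_iff (by positivity)]
      linear_combination (i + e) * h2 + (h - e - i) * habv
    refine ⟨ha', ?_, hc'⟩
    have hav : a * (h * (i + e)) = e * (h - e - i) :=
      (eq_div_iff (by positivity : h * (i + e) ≠ 0)).mp ha'
    rw [eq_div_iff (ne_of_gt hh)]
    have key : b * h * (i + e) = e * (i + e) := by linear_combination h * habv - hav
    exact mul_right_cancel₀ (ne_of_gt hie) key
  · rintro ⟨rfl, rfl, rfl⟩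
    refine ⟨by positivity, by positivity, by positivity, ?_, ?_, ?_⟩
    · field_simp; ring
    · rw [div_eq_iff (by positivity)]
      field_simp; ring
    · rw [div_eq_iff (by positivity)]
      field_simp; ring
end
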